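/- Suppose f is convex (and strictly decreasing, with intercepts L and M) and σ, τ > −1. Define C₂ = (1/2)(1 − σ⁻) f((1 − σ⁻)L/(2 − σ⁻)) − σ⁻ M − τ⁻ L. Then for all s ≥ 1 and all r ≥ (2 − σ⁻)s/L, the counting function satisfies N(r, s) ≤ r² A − C₂ r s + σ⁻ τ⁻. -/

import Mathlib

open Set Filter Asymptotics MeasureTheory

noncomputable section

/-- The negative part `x⁻ = max(−x, 0)` of a real number. -/
def nneg (x : ℝ) : ℝ := max (-x) 0

/-- The shifted-lattice counting function `N(r,s)`: the number of points of the
shifted lattice `(ℕ+σ) × (ℕ+τ)` lying inside or on the curve `rΓ(s)`. -/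
def countN (f : ℝ → ℝ) (σ τ L r s : ℝ) : ℕ :=
  Set.ncard {p : ℤ × ℤ | 1 ≤ p.1 ∧ 1 ≤ p.2 ∧ ((p.1 : ℝ) + σ) * s / r ≤ L ∧
    (p.2 : ℝ) + τ ≤ r * s * f (((p.1 : ℝ) + σ) * s / r)}

/-- The set `S(r)` of stretch factors `s > 0` maximizing `s ↦ N(r,s)`. -/
def maximizers (f : ℝ → ℝ) (σ τ L r : ℝ) : Set ℝ :=
  {s | 0 < s ∧ ∀ s' > 0, countN f σ τ L r s' ≤ countN f σ τ L r s}


section aux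
variable {L M : ℝ} {f : ℝ → ℝ}

lemma fnonneg (hfa : StrictAntiOn f (Icc 0 L)) (hfL : f L = 0) (hL : 0 < L) :
    ∀ x ∈ Icc 0 L, 0 ≤ f x := by
  intro x hx
  rcases eq_or_lt_of_le hx.2 with h | h
  · rw [h, hfL]
  · have := hfa hx (right_mem_Icc.mpr hL.le) h
    rw [hfL] at this; linarith

lemma fleM (hfa : StrictAntiOn f (Icc 0 L)) (hf0 : f 0 = M) (hL : 0 < L) :
    ∀ x ∈ Icc 0 L, f x ≤ M := by
  intro x hx
  rcases eq_or_lt_of_le hx.1 with h | h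
  · rw [← h, hf0]
  · have := hfa (left_mem_Icc.mpr hL.le) hx h
    rw [hf0] at this; linarith

lemma exists_support (hconv : ConvexOn ℝ (Icc 0 L) f) (hfa : StrictAntiOn f (Icc 0 L))
    {y : ℝ} (hy0 : 0 < y) (hyL : y < L) :
    ∃ m ≤ 0, ∀ x ∈ Icc 0 L, f y + m * (x - y) ≤ f x := by
  set S : Set ℝ := (fun x => (f y - f x) / (y - x)) '' (Ico 0 y) with hS
  have hyI : y ∈ Icc 0 L := ⟨hy0.le, hyL.le⟩
  have hLI : L ∈ Icc 0 L := right_mem_Icc.mpr (hy0.le.trans hyL.le)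
  have hmemI : ∀ x ∈ Ico (0:ℝ) y, x ∈ Icc 0 L := fun x hx => ⟨hx.1, hx.2.le.trans hyL.le⟩
  have hne : S.Nonempty := ⟨_, ⟨0, ⟨le_refl _, hy0⟩, rfl⟩⟩
  have hub : ∀ z ∈ S, z ≤ (f L - f y) / (L - y) := by
    rintro z ⟨x, hx, rfl⟩
    exact hconv.slope_mono_adjacent (hmemI x hx) hLI hx.2 hyL
  have hbdd : BddAbove S := ⟨_, hub⟩
  set m := sSup S with hm
  have hm_ge : ∀ x ∈ Ico (0:ℝ) y, (f y - f x) / (y - x) ≤ m := fun x hx =>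
    le_csSup hbdd ⟨x, hx, rfl⟩
  have hm0 : m ≤ 0 := by
    apply csSup_le hne
    rintro z ⟨x, hx, rfl⟩
    have hxy : x < y := hx.2
    have h2 : f y < f x := hfa (hmemI x hx) hyI hxy
    apply div_nonpos_of_nonpos_of_nonneg <;> linarith
  refine ⟨m, hm0, ?_⟩
  intro x hx
  rcases lt_trichotomy x y with h | h | h
  · have h1 := hm_ge x ⟨hx.1, h⟩
    have hxy : 0 < y - x := by linarith
    rw [div_le_iff₀ hxy] at h1
    have h2 : m * (x - y) = -(m * (y - x)) := by ring
    linarith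
  · simp [h]
  · have hmle : m ≤ (f x - f y) / (x - y) := by
      apply csSup_le hne
      rintro z ⟨w, hw, rfl⟩
      exact hconv.slope_mono_adjacent (hmemI w hw) hx hw.2 h
    have hxy : 0 < x - y := by linarith
    rw [le_div_iff₀ hxy] at hmle
    nlinarith

lemma fInt (hfc : ContinuousOn f (Icc 0 L)) {a b : ℝ} (h0 : 0 ≤ a) (hab : a ≤ b) (hbL : b ≤ L) :
    IntervalIntegrable f volume a b :=
  ContinuousOn.intervalIntegrable_of_Icc hab (hfc.mono (Icc_subset_Icc h0 hbL))

end aux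

section aux
variable {L M : ℝ} {f : ℝ → ℝ}

lemma midpoint_bound (hL : 0 < L)
    (hfc : ContinuousOn f (Icc 0 L)) (hfa : StrictAntiOn f (Icc 0 L))
    (hfL : f L = 0) (hconv : ConvexOn ℝ (Icc 0 L) f)
    {y t : ℝ} (ht : 0 ≤ t) (hyt : 0 ≤ y - t) (hy0 : 0 < y) (hyL : y ≤ L) :
    2 * t * f y ≤ ∫ x in (y - t)..(min (y + t) L), f x := by
  have hnn := fnonneg hfa hfL hL
  set u := min (y + t) L with hu
  have hu1 : y - t ≤ u := le_min (by linarith) (by linarith)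
  have hyu : y ≤ u := le_min (by linarith) hyL
  have hut : u ≤ y + t := min_le_left _ _
  have huL : u ≤ L := min_le_right _ _
  rcases eq_or_lt_of_le hyL with hEq | hlt
  · have h0 : f y = 0 := by rw [hEq, hfL]
    rw [h0, mul_zero]
    apply intervalIntegral.integral_nonneg hu1
    intro x hx
    exact hnn x ⟨by linarith [hx.1], le_trans hx.2 huL⟩
  · obtain ⟨m, hm0, hsup⟩ := exists_support hconv hfa hy0 hlt
    have hint : IntervalIntegrable f volume (y - t) u := fInt hfc hyt hu1 huL
    have hlin : IntervalIntegrable (fun x => f y + m * (x - y)) volume (y - t) u :=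
      (Continuous.intervalIntegrable (by continuity) _ _)
    have hmono : (∫ x in (y - t)..u, (f y + m * (x - y)))
        ≤ ∫ x in (y - t)..u, f x := by
      apply intervalIntegral.integral_mono_on hu1 hlin hint
      intro x hx
      exact hsup x ⟨by linarith [hx.1], hx.2.trans huL⟩
    have hcalc : (∫ x in (y - t)..u, (f y + m * (x - y)))
        = (u - (y - t)) * f y + m * ((u - y)^2 - t^2) / 2 := by
      have hrw : (fun x => f y + m * (x - y)) = fun x => m * x + (f y - m * y) := by
        funext x; ring
      rw [hrw, intervalIntegral.integral_add
            ((continuous_mul_left m).intervalIntegrable _ _)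
            (continuous_const.intervalIntegrable _ _),
          intervalIntegral.integral_const_mul, integral_id,
          intervalIntegral.integral_const, smul_eq_mul]
      ring
    -- final inequality
    rcases le_or_gt (y + t) L with hin | hout
    · have huy : u = y + t := min_eq_left hin
      rw [huy] at hcalc hmono ⊢
      have : ((y + t) - (y - t)) * f y + m * (((y + t) - y)^2 - t^2) / 2 = 2 * t * f y := by ring
      linarith [hmono, hcalc]
    · have huy : u = L := min_eq_right (le_of_lt hout)
      have hbrL : f y + m * (L - y) ≤ f L :=
        hsup L (right_mem_Icc.mpr hL.le)
      rw [hfL] at hbrL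
      set d := L - y with hd
      have hd0 : 0 ≤ d := by rw [hd]; linarith
      have hdt : d < t := by rw [hd]; linarith
      have hB : f y + m * (d + t) / 2 ≤ 0 := by
        have h1 : m * (t - d) ≤ 0 := mul_nonpos_of_nonpos_of_nonneg hm0 (by linarith)
        nlinarith [hbrL, h1]
      have key : (t - d) * (f y + m * (d + t) / 2) ≤ 0 :=
        mul_nonpos_of_nonneg_of_nonpos (by linarith) hB
      rw [huy] at hcalc hmono ⊢
      have hidd : (L - (y - t)) * f y + m * ((L - y)^2 - t^2) / 2 - 2 * t * f y
          = -((t - d) * (f y + m * (d + t) / 2)) := by rw [hd]; ring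
      linarith [hmono, hcalc, key]

end aux
section aux2
variable {L M : ℝ} {f : ℝ → ℝ}

lemma chain_bound (hL : 0 < L)
    (hfc : ContinuousOn f (Icc 0 L)) (hfa : StrictAntiOn f (Icc 0 L))
    (hfL : f L = 0) (hconv : ConvexOn ℝ (Icc 0 L) f)
    {p h : ℝ} (hp0 : 0 ≤ p) (hp1 : p < 1) (hh : 0 < h)
    (hhL : (2 - p) * h ≤ L) :
    ∀ n : ℤ, 1 ≤ n → ((n : ℝ) - p) * h ≤ L →
      ∑ j ∈ Finset.Icc (2:ℤ) n, h * f (((j : ℝ) - p) * h)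
        ≤ ∫ x in ((1 - p) * h + h / 2)..(min (((n : ℝ) - p) * h + h / 2) L), f x := by
  intro n hn
  refine Int.le_induction (motive := fun n _ => ((n : ℝ) - p) * h ≤ L →
      ∑ j ∈ Finset.Icc (2:ℤ) n, h * f (((j : ℝ) - p) * h)
        ≤ ∫ x in ((1 - p) * h + h / 2)..(min (((n : ℝ) - p) * h + h / 2) L), f x) ?_ ?_ n hn
  · intro _
    rw [Finset.Icc_eq_empty (by omega), Finset.sum_empty,
      show ((((1:ℤ)) : ℝ) - p) * h = (1 - p) * h by norm_num,
      min_eq_left (by linarith), intervalIntegral.integral_same]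
  · intro n hn1 ih hle
    push_cast at hle
    have hn1R : (1 : ℝ) ≤ (n : ℝ) := by exact_mod_cast hn1
    have hmul : 1 * h ≤ (n : ℝ) * h := mul_le_mul_of_nonneg_right hn1R hh.le
    have hnL : ((n : ℝ) - p) * h ≤ L := by nlinarith
    have ih' := ih hnL
    have hinsert : Finset.Icc (2:ℤ) (n + 1) = insert (n + 1) (Finset.Icc 2 n) := by
      ext j
      simp only [Finset.mem_Icc, Finset.mem_insert]
      omega
    rw [hinsert, Finset.sum_insert (by simp [Finset.mem_Icc])]
    have hy0 : (0:ℝ) ≤ (((n:ℝ) + 1) - p) * h - h / 2 := by nlinarith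
    have hnew : h * f ((((n:ℝ) + 1) - p) * h)
        ≤ ∫ x in ((((n:ℝ) + 1) - p) * h - h / 2)..(min ((((n:ℝ) + 1) - p) * h + h / 2) L), f x := by
      have key := midpoint_bound hL hfc hfa hfL hconv (t := h / 2) (y := (((n:ℝ) + 1) - p) * h)
        (by linarith) hy0 (by nlinarith) (by linarith)
      calc h * f ((((n:ℝ) + 1) - p) * h) = 2 * (h / 2) * f ((((n:ℝ) + 1) - p) * h) := by ring
        _ ≤ _ := key
    have hmid : min (((n : ℝ) - p) * h + h / 2) L = (((n:ℝ) + 1) - p) * h - h / 2 := by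
      rw [min_eq_left (by linarith)]
      ring
    rw [hmid] at ih'
    have hadj : (∫ x in ((1 - p) * h + h / 2)..((((n:ℝ) + 1) - p) * h - h / 2), f x)
          + ∫ x in ((((n:ℝ) + 1) - p) * h - h / 2)..(min ((((n:ℝ) + 1) - p) * h + h / 2) L), f x
        = ∫ x in ((1 - p) * h + h / 2)..(min ((((n:ℝ) + 1) - p) * h + h / 2) L), f x := by
      apply intervalIntegral.integral_add_adjacent_intervals
      · apply fInt hfc (by nlinarith) (by nlinarith) (by linarith)
      · apply fInt hfc hy0
          (le_min (by linarith) (by linarith)) (min_le_right _ _)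
    push_cast
    linarith [ih', hnew, hadj.ge, hadj.le]
end aux2
section aux3
variable {L M : ℝ} {f : ℝ → ℝ}

lemma anti_le (hfa : StrictAntiOn f (Icc 0 L)) {x y : ℝ}
    (hx : x ∈ Icc 0 L) (hy : y ∈ Icc 0 L) (hxy : x ≤ y) : f y ≤ f x := by
  rcases eq_or_lt_of_le hxy with h | h
  · rw [h]
  · exact (hfa hx hy h).le

lemma int_ge_const (hL : 0 < L) (hfc : ContinuousOn f (Icc 0 L))
    (hfa : StrictAntiOn f (Icc 0 L)) {a b : ℝ}
    (h0 : 0 ≤ a) (hab : a ≤ b) (hbL : b ≤ L) :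
    (b - a) * f b ≤ ∫ x in a..b, f x := by
  have := intervalIntegral.integral_mono_on (f := fun _ => f b) (g := f) hab
    (continuous_const.intervalIntegrable _ _) (fInt hfc h0 hab hbL)
    (fun x hx => anti_le hfa ⟨h0.trans hx.1, hx.2.trans hbL⟩ ⟨h0.trans hab, hbL⟩ hx.2)
  rwa [intervalIntegral.integral_const, smul_eq_mul] at this

lemma int_le_total (hL : 0 < L) (hfc : ContinuousOn f (Icc 0 L))
    (hfa : StrictAntiOn f (Icc 0 L)) (hfL : f L = 0) {a b : ℝ}
    (h0 : 0 ≤ a) (hab : a ≤ b) (hbL : b ≤ L) :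
    (∫ x in a..b, f x) ≤ ∫ x in (0:ℝ)..L, f x := by
  have hnn := fnonneg hfa hfL hL
  have e1 : (∫ x in (0:ℝ)..a, f x) + ∫ x in a..b, f x = ∫ x in (0:ℝ)..b, f x :=
    intervalIntegral.integral_add_adjacent_intervals
      (fInt hfc le_rfl h0 (hab.trans hbL)) (fInt hfc h0 hab hbL)
  have e2 : (∫ x in (0:ℝ)..b, f x) + ∫ x in b..L, f x = ∫ x in (0:ℝ)..L, f x :=
    intervalIntegral.integral_add_adjacent_intervals
      (fInt hfc le_rfl (h0.trans hab) hbL) (fInt hfc (h0.trans hab) hbL le_rfl)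
  have n1 : 0 ≤ ∫ x in (0:ℝ)..a, f x :=
    intervalIntegral.integral_nonneg h0 (fun x hx => hnn x ⟨hx.1, hx.2.trans (hab.trans hbL)⟩)
  have n2 : 0 ≤ ∫ x in b..L, f x :=
    intervalIntegral.integral_nonneg hbL (fun x hx => hnn x ⟨(h0.trans hab).trans hx.1, hx.2⟩)
  linarith

set_option maxHeartbeats 1000000 in
lemma sum_bound (hL : 0 < L) (hM : 0 < M)
    (hfc : ContinuousOn f (Icc 0 L)) (hfa : StrictAntiOn f (Icc 0 L))
    (hf0 : f 0 = M) (hfL : f L = 0) (hconv : ConvexOn ℝ (Icc 0 L) f)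
    {p h : ℝ} (hp0 : 0 ≤ p) (hp1 : p < 1) (hh : 0 < h) (hhL : (2 - p) * h ≤ L)
    {n : ℤ} (hnL : ((n : ℝ) - p) * h ≤ L) :
    h * ∑ j ∈ Finset.Icc (1:ℤ) n, f (((j : ℝ) - p) * h)
      ≤ (∫ x in (0:ℝ)..L, f x) + p * M * h
          - (1 - p) / 2 * f ((1 - p) * L / (2 - p)) * h := by
  have hnn := fnonneg hfa hfL hL
  have hleM := fleM hfa hf0 hL
  have hp2 : (0:ℝ) < 2 - p := by linarith
  have h1p : (0:ℝ) ≤ (1 - p) * h := mul_nonneg (by linarith) hh.le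
  have hxs0 : 0 ≤ (1 - p) * L / (2 - p) := div_nonneg (by nlinarith) hp2.le
  have hxsL : (1 - p) * L / (2 - p) ≤ L := by
    rw [div_le_iff₀ hp2]; nlinarith
  have hxsI : (1 - p) * L / (2 - p) ∈ Icc 0 L := ⟨hxs0, hxsL⟩
  have hfs0 : 0 ≤ f ((1 - p) * L / (2 - p)) := hnn _ hxsI
  have hfsM : f ((1 - p) * L / (2 - p)) ≤ M := hleM _ hxsI
  have hhx : (1 - p) * h ≤ (1 - p) * L / (2 - p) := by
    rw [le_div_iff₀ hp2]; nlinarith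
  have h1pL : (1 - p) * h + h / 2 ≤ L := by nlinarith
  have hA_ge : (1 - p) * h * f ((1 - p) * L / (2 - p)) ≤ ∫ x in (0:ℝ)..L, f x := by
    have e1 : ((1 - p) * h - 0) * f ((1 - p) * h) ≤ ∫ x in (0:ℝ)..((1 - p) * h), f x :=
      int_ge_const hL hfc hfa le_rfl h1p (by nlinarith)
    have e2 : f ((1 - p) * L / (2 - p)) ≤ f ((1 - p) * h) :=
      anti_le hfa ⟨h1p, by nlinarith⟩ hxsI hhx
    have e3 : (∫ x in (0:ℝ)..((1 - p) * h), f x) ≤ ∫ x in (0:ℝ)..L, f x :=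
      int_le_total hL hfc hfa hfL le_rfl h1p (by nlinarith)
    have e4 := mul_le_mul_of_nonneg_left e2 h1p
    linarith
  have hpMh : 0 ≤ p * M * h := mul_nonneg (mul_nonneg hp0 hM.le) hh.le
  have h1pf : 0 ≤ (1 - p) * h * f ((1 - p) * L / (2 - p)) := mul_nonneg h1p hfs0
  rcases le_or_gt n 0 with hn0 | hn1
  · rw [Finset.Icc_eq_empty (by omega), Finset.sum_empty, mul_zero]
    nlinarith
  · -- n ≥ 1
    have hn1R : (1:ℝ) ≤ (n:ℝ) := by exact_mod_cast hn1
    have hmul1 : 1 * h ≤ (n:ℝ) * h := mul_le_mul_of_nonneg_right hn1R hh.le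
    have hinsert : Finset.Icc (1:ℤ) n = insert 1 (Finset.Icc 2 n) := by
      ext j; simp only [Finset.mem_Icc, Finset.mem_insert]; omega
    rw [hinsert, Finset.sum_insert (by simp [Finset.mem_Icc])]
    have hchain := chain_bound hL hfc hfa hfL hconv hp0 hp1 hh hhL n hn1 hnL
    have ha0 : (0:ℝ) ≤ (1 - p) * h + h / 2 := by linarith
    have haU : (1 - p) * h + h / 2 ≤ min (((n : ℝ) - p) * h + h / 2) L :=
      le_min (by linarith) h1pL
    have hUL : min (((n : ℝ) - p) * h + h / 2) L ≤ L := min_le_right _ _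
    have hI2 : (∫ x in ((1 - p) * h + h / 2)..(min (((n : ℝ) - p) * h + h / 2) L), f x)
        ≤ ∫ x in ((1 - p) * h + h / 2)..L, f x := by
      have e : (∫ x in ((1 - p) * h + h / 2)..(min (((n : ℝ) - p) * h + h / 2) L), f x)
            + ∫ x in (min (((n : ℝ) - p) * h + h / 2) L)..L, f x
          = ∫ x in ((1 - p) * h + h / 2)..L, f x :=
        intervalIntegral.integral_add_adjacent_intervals
          (fInt hfc ha0 haU hUL) (fInt hfc (ha0.trans haU) hUL le_rfl)
      have n2 : 0 ≤ ∫ x in (min (((n : ℝ) - p) * h + h / 2) L)..L, f x :=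
        intervalIntegral.integral_nonneg hUL (fun x hx => hnn x ⟨(ha0.trans haU).trans hx.1, hx.2⟩)
      linarith
    have hsum2 : ∑ j ∈ Finset.Icc (2:ℤ) n, h * f (((j : ℝ) - p) * h)
        ≤ ∫ x in ((1 - p) * h + h / 2)..L, f x := le_trans hchain hI2
    have hmulsum : h * ∑ j ∈ Finset.Icc (2:ℤ) n, f (((j : ℝ) - p) * h)
        = ∑ j ∈ Finset.Icc (2:ℤ) n, h * f (((j : ℝ) - p) * h) := Finset.mul_sum _ _ _
    have hy1 : (((1:ℤ):ℝ) - p) * h = (1 - p) * h := by norm_num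
    rw [hy1, mul_add, hmulsum]
    rcases le_or_gt p (1/2 : ℝ) with hphalf | hphalf
    · -- p ≤ 1/2 : midpoint at y1
      have hhalf : (0:ℝ) ≤ (1/2 - p) * h := mul_nonneg (by linarith) hh.le
      have hkey := midpoint_bound hL hfc hfa hfL hconv (t := h / 2) (y := (1 - p) * h)
        (by linarith) (by nlinarith [hhalf]) (by nlinarith [mul_pos (show (0:ℝ) < 1 - p by linarith) hh]) (by linarith)
      rw [min_eq_left h1pL] at hkey
      have hg0 : (0:ℝ) ≤ (1 - p) * h - h / 2 := by nlinarith [hhalf]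
      have hgxs : (1 - p) * h - h / 2 ≤ (1 - p) * L / (2 - p) := by linarith
      have hgap : ((1 - p) * h - h / 2 - 0) * f ((1 - p) * h - h / 2)
          ≤ ∫ x in (0:ℝ)..((1 - p) * h - h / 2), f x :=
        int_ge_const hL hfc hfa le_rfl hg0 (by linarith)
      have hgf : f ((1 - p) * L / (2 - p)) ≤ f ((1 - p) * h - h / 2) :=
        anti_le hfa ⟨hg0, by linarith⟩ hxsI hgxs
      have hgf2 := mul_le_mul_of_nonneg_left hgf hg0
      have e1 : (∫ x in ((1 - p) * h - h / 2)..((1 - p) * h + h / 2), f x)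
            + ∫ x in ((1 - p) * h + h / 2)..L, f x
          = ∫ x in ((1 - p) * h - h / 2)..L, f x :=
        intervalIntegral.integral_add_adjacent_intervals
          (fInt hfc hg0 (by linarith) h1pL) (fInt hfc ha0 h1pL le_rfl)
      have e2 : (∫ x in (0:ℝ)..((1 - p) * h - h / 2), f x)
            + ∫ x in ((1 - p) * h - h / 2)..L, f x = ∫ x in (0:ℝ)..L, f x :=
        intervalIntegral.integral_add_adjacent_intervals
          (fInt hfc le_rfl hg0 (by linarith)) (fInt hfc hg0 (by linarith) le_rfl)
      -- budget:  (p/2) f* ≤ p M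
      have hbud := mul_le_mul_of_nonneg_left hfsM (mul_nonneg hp0 hh.le)
      linarith [hkey, hsum2, hgap, hgf2, e1, e2, hbud, hpMh]
    · -- p > 1/2
      have hy10 : (0:ℝ) < (1 - p) * h := mul_pos (by linarith) hh
      have hkey := midpoint_bound hL hfc hfa hfL hconv (t := (1 - p) * h) (y := (1 - p) * h)
        hy10.le (by linarith) hy10 (by linarith)
      rw [sub_self] at hkey
      have hm10 : (0:ℝ) ≤ min ((1 - p) * h + (1 - p) * h) L := le_min (by linarith) hL.le
      have hph : (0:ℝ) ≤ (p - 1/2) * h := mul_nonneg (by linarith) hh.le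
      have hm1a : min ((1 - p) * h + (1 - p) * h) L ≤ (1 - p) * h + h / 2 :=
        min_le_of_left_le (by nlinarith [hph])
      have e1 : (∫ x in (0:ℝ)..(min ((1 - p) * h + (1 - p) * h) L), f x)
            + ∫ x in (min ((1 - p) * h + (1 - p) * h) L)..((1 - p) * h + h / 2), f x
          = ∫ x in (0:ℝ)..((1 - p) * h + h / 2), f x :=
        intervalIntegral.integral_add_adjacent_intervals
          (fInt hfc le_rfl hm10 (hm1a.trans h1pL)) (fInt hfc hm10 hm1a h1pL)
      have e2 : (∫ x in (0:ℝ)..((1 - p) * h + h / 2), f x)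
            + ∫ x in ((1 - p) * h + h / 2)..L, f x = ∫ x in (0:ℝ)..L, f x :=
        intervalIntegral.integral_add_adjacent_intervals
          (fInt hfc le_rfl ha0 h1pL) (fInt hfc ha0 h1pL le_rfl)
      have n1 : 0 ≤ ∫ x in (min ((1 - p) * h + (1 - p) * h) L)..((1 - p) * h + h / 2), f x :=
        intervalIntegral.integral_nonneg hm1a
          (fun x hx => hnn x ⟨hm10.trans hx.1, hx.2.trans h1pL⟩)
      have hfy1M : f ((1 - p) * h) ≤ M := hleM _ ⟨h1p, by linarith⟩
      have h2p1h : (0:ℝ) ≤ (2*p - 1) * h := mul_nonneg (by linarith) hh.le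
      have hb := mul_le_mul_of_nonneg_left hfy1M h2p1h
      -- budget: (1-p)/2 f* ≤ (1-p) M
      have hbud2 := mul_le_mul_of_nonneg_left hfsM h1p
      have hMn : (0:ℝ) ≤ (1 - p) * h * M := mul_nonneg h1p hM.le
      linarith [hkey, hsum2, hb, e1, e2, n1, hbud2, hMn]
end aux3

lemma toNat_cast_le {a : ℤ} {c : ℝ} (ha : (a : ℝ) ≤ c) (hc : 0 ≤ c) :
    ((a.toNat : ℕ) : ℝ) ≤ c := by
  rcases le_or_gt a 0 with h | h
  · rw [Int.toNat_of_nonpos h]; simpa using hc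
  · have h2 : ((a.toNat : ℕ) : ℤ) = a := Int.toNat_of_nonneg h.le
    have h3 : ((a.toNat : ℕ) : ℝ) = (a : ℝ) := by exact_mod_cast congrArg (fun z : ℤ => (z : ℝ)) h2
    rw [h3]; exact ha

set_option maxHeartbeats 1000000 in
/-- Two-term upper bound on the counting function for convex curves:
`N(r,s) ≤ r² Area(Γ) − C₂ r s + σ⁻ τ⁻` for all `s ≥ 1` and `r ≥ (2−σ⁻)s/L`, where
`C₂ = ½(1−σ⁻) f((1−σ⁻)L/(2−σ⁻)) − σ⁻ M − τ⁻ L`. -/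
theorem counting_upper_bound_convex (L M σ τ : ℝ) (f : ℝ → ℝ)
    (hL : 0 < L) (hM : 0 < M)
    (hfc : ContinuousOn f (Icc 0 L)) (hfa : StrictAntiOn f (Icc 0 L))
    (hf0 : f 0 = M) (hfL : f L = 0)
    (hconv : ConvexOn ℝ (Icc 0 L) f)
    (hσ : -1 < σ) (hτ : -1 < τ) :
    ∀ s ≥ (1 : ℝ), ∀ r ≥ (2 - nneg σ) * s / L,
      (countN f σ τ L r s : ℝ) ≤
        r ^ 2 * (∫ x in (0 : ℝ)..L, f x)
          - (1 / 2 * (1 - nneg σ) * f ((1 - nneg σ) * L / (2 - nneg σ))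
              - nneg σ * M - nneg τ * L) * r * s
          + nneg σ * nneg τ := by
  intro s hs r hr
  have hnn := fnonneg hfa hfL hL
  have hleM := fleM hfa hf0 hL
  set p := nneg σ with hpdef
  set q := nneg τ with hqdef
  have hp0 : 0 ≤ p := le_max_right _ _
  have hpσ : -σ ≤ p := le_max_left _ _
  have hp1 : p < 1 := max_lt (by linarith) one_pos
  have hq0 : 0 ≤ q := le_max_right _ _
  have hqτ : -τ ≤ q := le_max_left _ _
  have hs0 : 0 < s := lt_of_lt_of_le one_pos hs
  have hp2 : (0:ℝ) < 2 - p := by linarith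
  have hr0 : 0 < r := lt_of_lt_of_le (div_pos (mul_pos hp2 hs0) hL) hr
  have hrs : 0 < r * s := mul_pos hr0 hs0
  have hh : 0 < s / r := div_pos hs0 hr0
  have hrL : (2 - p) * s ≤ r * L := by
    have := (div_le_iff₀ hL).mp hr
    linarith
  have hhL : (2 - p) * (s / r) ≤ L := by
    rw [← mul_div_assoc, div_le_iff₀ hr0]
    linarith
  set Jz : ℤ := ⌊L * r / s - σ⌋ with hJzdef
  set Kz : ℤ := ⌊r * s * M - τ⌋ with hKzdef
  set nz : ℤ := ⌊L * r / s + p⌋ with hnzdef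
  have hJn : Jz ≤ nz := Int.floor_le_floor (by linarith)
  -- basic bounds on the abscissas
  have hxj0 : ∀ j : ℤ, 1 ≤ j → 0 ≤ ((j:ℝ) + σ) * s / r := by
    intro j hj
    have : (1:ℝ) ≤ (j:ℝ) := by exact_mod_cast hj
    apply div_nonneg (mul_nonneg (by linarith) hs0.le) hr0.le
  have hxjL : ∀ j : ℤ, j ≤ Jz → ((j:ℝ) + σ) * s / r ≤ L := by
    intro j hj
    have h1 : (j:ℝ) ≤ L * r / s - σ :=
      le_trans (by exact_mod_cast hj) (Int.floor_le _)
    have h2 : (j:ℝ) + σ ≤ L * r / s := by linarith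
    have h3 : ((j:ℝ) + σ) * s ≤ L * r := by
      have := (le_div_iff₀ hs0).mp h2
      linarith
    rw [div_le_iff₀ hr0]
    linarith
  have hyjL : ∀ j : ℤ, j ≤ nz → ((j:ℝ) - p) * (s / r) ≤ L := by
    intro j hj
    have h1 : (j:ℝ) ≤ L * r / s + p :=
      le_trans (by exact_mod_cast hj) (Int.floor_le _)
    have h2 : (j:ℝ) - p ≤ L * r / s := by linarith
    have h3 : ((j:ℝ) - p) * s ≤ L * r := by
      have := (le_div_iff₀ hs0).mp h2
      linarith
    rw [← mul_div_assoc, div_le_iff₀ hr0]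
    linarith
  have hyj0 : ∀ j : ℤ, 1 ≤ j → 0 ≤ ((j:ℝ) - p) * (s / r) := by
    intro j hj
    have : (1:ℝ) ≤ (j:ℝ) := by exact_mod_cast hj
    exact mul_nonneg (by linarith) hh.le
  -- identify the counted set with a finite set
  have hTeq : {pt : ℤ × ℤ | 1 ≤ pt.1 ∧ 1 ≤ pt.2 ∧ ((pt.1 : ℝ) + σ) * s / r ≤ L ∧
      (pt.2 : ℝ) + τ ≤ r * s * f (((pt.1 : ℝ) + σ) * s / r)}
      = ↑((Finset.Icc (1:ℤ) Jz ×ˢ Finset.Icc (1:ℤ) Kz).filter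
          (fun pt => ((pt.1 : ℝ) + σ) * s / r ≤ L ∧
            (pt.2 : ℝ) + τ ≤ r * s * f (((pt.1 : ℝ) + σ) * s / r))) := by
    ext ⟨j, k⟩
    simp only [Set.mem_setOf_eq, Finset.coe_filter, Finset.mem_product, Finset.mem_Icc,
      Set.mem_setOf_eq]
    constructor
    · rintro ⟨h1, h2, h3, h4⟩
      refine ⟨⟨⟨h1, ?_⟩, ⟨h2, ?_⟩⟩, h3, h4⟩
      · apply Int.le_floor.mpr
        have h5 : ((j:ℝ) + σ) * s ≤ L * r := by
          rw [div_le_iff₀ hr0] at h3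
          linarith
        have h6 : (j:ℝ) + σ ≤ L * r / s := by
          rw [le_div_iff₀ hs0]
          linarith
        linarith
      · apply Int.le_floor.mpr
        have hxI : ((j:ℝ) + σ) * s / r ∈ Icc 0 L := ⟨hxj0 j h1, h3⟩
        have h5 := hleM _ hxI
        have h6 := mul_le_mul_of_nonneg_left h5 hrs.le
        linarith
    · rintro ⟨⟨⟨h1, _⟩, ⟨h2, _⟩⟩, h3, h4⟩
      exact ⟨h1, h2, h3, h4⟩
  have hcount : (countN f σ τ L r s : ℝ)
      = (((Finset.Icc (1:ℤ) Jz ×ˢ Finset.Icc (1:ℤ) Kz).filter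
          (fun pt => ((pt.1 : ℝ) + σ) * s / r ≤ L ∧
            (pt.2 : ℝ) + τ ≤ r * s * f (((pt.1 : ℝ) + σ) * s / r))).card : ℝ) := by
    simp only [countN, hTeq, Set.ncard_coe_finset]
  -- fiberwise counting
  set F := (Finset.Icc (1:ℤ) Jz ×ˢ Finset.Icc (1:ℤ) Kz).filter
      (fun pt => ((pt.1 : ℝ) + σ) * s / r ≤ L ∧
        (pt.2 : ℝ) + τ ≤ r * s * f (((pt.1 : ℝ) + σ) * s / r)) with hFdef
  have hfiber : F.card = ∑ j ∈ Finset.Icc (1:ℤ) Jz, (F.filter (fun pt => pt.1 = j)).card := by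
    apply Finset.card_eq_sum_card_fiberwise
    intro x hx
    rw [Finset.mem_coe, hFdef, Finset.mem_filter, Finset.mem_product] at hx
    exact hx.1.1
  have hfib_le : ∀ j ∈ Finset.Icc (1:ℤ) Jz,
      ((F.filter (fun pt => pt.1 = j)).card : ℝ) ≤ r * s * f (((j:ℝ) + σ) * s / r) + q := by
    intro j hj
    rw [Finset.mem_Icc] at hj
    have hxI : ((j:ℝ) + σ) * s / r ∈ Icc 0 L := ⟨hxj0 j hj.1, hxjL j hj.2⟩
    have hf0' : 0 ≤ f (((j:ℝ) + σ) * s / r) := hnn _ hxI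
    have hcardle : (F.filter (fun pt => pt.1 = j)).card
        ≤ (Finset.Icc (1:ℤ) ⌊r * s * f (((j:ℝ) + σ) * s / r) - τ⌋).card := by
      apply Finset.card_le_card_of_injOn (fun pt => pt.2)
      · intro x hx
        rw [Finset.mem_coe, Finset.mem_filter, hFdef, Finset.mem_filter, Finset.mem_product,
          Finset.mem_Icc, Finset.mem_Icc] at hx
        obtain ⟨⟨⟨_, hk1, _⟩, _, hxf⟩, hxj⟩ := hx
        rw [Finset.mem_coe, Finset.mem_Icc]
        refine ⟨hk1, Int.le_floor.mpr ?_⟩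
        rw [hxj] at hxf
        linarith
      · intro x hx y hy hxy
        rw [Finset.mem_coe, Finset.mem_filter] at hx hy
        exact Prod.ext (hx.2.trans hy.2.symm) hxy
    calc ((F.filter (fun pt => pt.1 = j)).card : ℝ)
        ≤ ((Finset.Icc (1:ℤ) ⌊r * s * f (((j:ℝ) + σ) * s / r) - τ⌋).card : ℝ) := by
          exact_mod_cast hcardle
      _ ≤ r * s * f (((j:ℝ) + σ) * s / r) + q := by
          rw [Int.card_Icc]
          simp only [add_sub_cancel_right]
          apply toNat_cast_le
          · have := Int.floor_le (r * s * f (((j:ℝ) + σ) * s / r) - τ)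
            linarith
          · exact add_nonneg (mul_nonneg hrs.le hf0') hq0
  -- sum over fibers
  have hsumx : (F.card : ℝ)
      ≤ ∑ j ∈ Finset.Icc (1:ℤ) Jz, (r * s * f (((j:ℝ) + σ) * s / r) + q) := by
    rw [hfiber]
    push_cast
    exact Finset.sum_le_sum hfib_le
  have hsplit : ∑ j ∈ Finset.Icc (1:ℤ) Jz, (r * s * f (((j:ℝ) + σ) * s / r) + q)
      = r * s * (∑ j ∈ Finset.Icc (1:ℤ) Jz, f (((j:ℝ) + σ) * s / r))
        + q * (Finset.Icc (1:ℤ) Jz).card := by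
    rw [Finset.sum_add_distrib, Finset.mul_sum, Finset.sum_const, nsmul_eq_mul, mul_comm]
    ring
  -- compare with the reduced lattice sum
  have hterm : ∀ j ∈ Finset.Icc (1:ℤ) Jz,
      f (((j:ℝ) + σ) * s / r) ≤ f (((j:ℝ) - p) * (s / r)) := by
    intro j hj
    rw [Finset.mem_Icc] at hj
    have h1R : (1:ℝ) ≤ (j:ℝ) := by exact_mod_cast hj.1
    apply anti_le hfa ⟨hyj0 j hj.1, (hyjL j (hj.2.trans hJn))⟩ ⟨hxj0 j hj.1, hxjL j hj.2⟩
    have hrw : ((j:ℝ) + σ) * s / r = ((j:ℝ) + σ) * (s / r) := by ring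
    rw [hrw]
    exact mul_le_mul_of_nonneg_right (by linarith) hh.le
  have hsub : Finset.Icc (1:ℤ) Jz ⊆ Finset.Icc (1:ℤ) nz := by
    apply Finset.Icc_subset_Icc le_rfl hJn
  have hsum_cmp : (∑ j ∈ Finset.Icc (1:ℤ) Jz, f (((j:ℝ) + σ) * s / r))
      ≤ ∑ j ∈ Finset.Icc (1:ℤ) nz, f (((j:ℝ) - p) * (s / r)) := by
    calc (∑ j ∈ Finset.Icc (1:ℤ) Jz, f (((j:ℝ) + σ) * s / r))
        ≤ ∑ j ∈ Finset.Icc (1:ℤ) Jz, f (((j:ℝ) - p) * (s / r)) := Finset.sum_le_sum hterm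
      _ ≤ _ := by
          apply Finset.sum_le_sum_of_subset_of_nonneg hsub
          intro j hj _
          rw [Finset.mem_Icc] at hj
          exact hnn _ ⟨hyj0 j hj.1, hyjL j hj.2⟩
  -- the analytic bound
  have hnzL : ((nz:ℝ) - p) * (s / r) ≤ L := hyjL nz le_rfl
  have hmain := sum_bound hL hM hfc hfa hf0 hfL hconv hp0 hp1 hh hhL hnzL
  -- multiply by r^2
  have hr2 : (0:ℝ) ≤ r^2 := sq_nonneg r
  have hmain2 := mul_le_mul_of_nonneg_left hmain hr2
  have hlhs : r^2 * ((s / r) * ∑ j ∈ Finset.Icc (1:ℤ) nz, f (((j:ℝ) - p) * (s / r)))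
      = r * s * ∑ j ∈ Finset.Icc (1:ℤ) nz, f (((j:ℝ) - p) * (s / r)) := by
    field_simp
  have hrhs : r^2 * ((∫ x in (0:ℝ)..L, f x) + p * M * (s / r)
        - (1 - p) / 2 * f ((1 - p) * L / (2 - p)) * (s / r))
      = r^2 * (∫ x in (0:ℝ)..L, f x) + p * M * (r * s)
        - (1 - p) / 2 * f ((1 - p) * L / (2 - p)) * (r * s) := by
    field_simp
  rw [hlhs, hrhs] at hmain2
  -- bound the cardinality term
  have hcard_le : ((Finset.Icc (1:ℤ) Jz).card : ℝ) ≤ L * r / s + p := by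
    rw [Int.card_Icc]
    simp only [add_sub_cancel_right]
    apply toNat_cast_le
    · have h9 := Int.floor_le (L * r / s - σ)
      rw [← hJzdef] at h9
      linarith
    · have : 0 < L * r / s := by positivity
      linarith
  have hq_card : q * ((Finset.Icc (1:ℤ) Jz).card : ℝ) ≤ q * L * (r * s) + p * q := by
    have h1 : L * r / s ≤ L * r * s := by
      rw [div_le_iff₀ hs0]
      have h2 : (1:ℝ) ≤ s * s := by nlinarith
      nlinarith [mul_pos (mul_pos hL hr0) hs0, mul_nonneg (mul_nonneg hL.le hr0.le) (by nlinarith : (0:ℝ) ≤ s*s - 1)]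
    have h3 := mul_le_mul_of_nonneg_left hcard_le hq0
    have h4 : q * (L * r / s) ≤ q * (L * r * s) := mul_le_mul_of_nonneg_left h1 hq0
    nlinarith [h3, h4]
  -- assemble everything
  have hchain1 : (countN f σ τ L r s : ℝ)
      ≤ r * s * (∑ j ∈ Finset.Icc (1:ℤ) nz, f (((j:ℝ) - p) * (s / r)))
        + q * (Finset.Icc (1:ℤ) Jz).card := by
    rw [hcount]
    calc (F.card : ℝ) ≤ _ := hsumx
      _ = _ := hsplit
      _ ≤ _ := by
          have := mul_le_mul_of_nonneg_left hsum_cmp hrs.le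
          linarith
  calc (countN f σ τ L r s : ℝ)
      ≤ r * s * (∑ j ∈ Finset.Icc (1:ℤ) nz, f (((j:ℝ) - p) * (s / r)))
        + q * (Finset.Icc (1:ℤ) Jz).card := hchain1
    _ ≤ (r^2 * (∫ x in (0:ℝ)..L, f x) + p * M * (r * s)
          - (1 - p) / 2 * f ((1 - p) * L / (2 - p)) * (r * s))
        + (q * L * (r * s) + p * q) := by
          linarith [hmain2, hq_card]
    _ ≤ _ := by ring_nf; linarith

end
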